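/- Every nonprincipal ultraproduct of finite fields is quasi-finite, i.e., it is perfect and has a unique field extension of each finite degree n ≥ 1. -/

import Mathlib

/-- `K` (with surjection `π` from the product) is the ultraproduct of the family `R`
with respect to the ultrafilter `D`. -/
def IsUltraproduct {S : Type*} {R : S → Type*} [∀ s, CommRing (R s)]
    {K : Type*} [CommRing K] (D : Ultrafilter S) (π : (∀ s, R s) →+* K) : Prop :=
  Function.Surjective π ∧ ∀ f g : ∀ s, R s, π f = π g ↔ {s | f s = g s} ∈ D

/-- A quasi-finite field: a perfect field with exactly one extension of each finite
degree `n ≥ 1` inside a fixed algebraic closure. -/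
def QuasiFinite (K : Type*) [Field K] : Prop :=
  PerfectField K ∧ ∀ n : ℕ, 1 ≤ n →
    ∃! E : IntermediateField K (AlgebraicClosure K), Module.finrank K ↥E = n

open Polynomial IntermediateField

noncomputable section

namespace UQF

section Poly

variable {A B : Type*} [CommRing A] [CommRing B]

/-- truncated polynomial built from a coefficient function -/
def trunc (c : ℕ → A) (m : ℕ) : A[X] := ∑ k ∈ Finset.range m, monomial k (c k)

lemma map_trunc (φ : A →+* B) (c : ℕ → A) (m : ℕ) :
    (trunc c m).map φ = trunc (fun k => φ (c k)) m := by
  simp [trunc, Polynomial.map_sum, Polynomial.map_monomial]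

lemma trunc_coeff_eq_self {u : A[X]} {m : ℕ} (h : u.natDegree < m) :
    trunc u.coeff m = u := (Polynomial.as_sum_range' u m h).symm

lemma degree_trunc_lt (c : ℕ → A) (m : ℕ) : (trunc c m).degree < m := by
  apply lt_of_le_of_lt (Polynomial.degree_sum_le _ _)
  rw [Finset.sup_lt_iff (by exact_mod_cast WithBot.bot_lt_coe m)]
  intro k hk
  exact lt_of_le_of_lt (Polynomial.degree_monomial_le k (c k))
    (by exact_mod_cast Finset.mem_range.mp hk)

/-- monic polynomial of degree `m` built from a coefficient function -/
def mlift (c : ℕ → A) (m : ℕ) : A[X] := X ^ m + trunc c m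

lemma monic_mlift (c : ℕ → A) (m : ℕ) : (mlift c m).Monic :=
  monic_X_pow_add (degree_trunc_lt c m)

lemma degree_mlift [Nontrivial A] (c : ℕ → A) (m : ℕ) : (mlift c m).degree = m := by
  rw [mlift, degree_add_eq_left_of_degree_lt (by rw [degree_X_pow]; exact degree_trunc_lt c m),
    degree_X_pow]

lemma natDegree_mlift [Nontrivial A] (c : ℕ → A) (m : ℕ) : (mlift c m).natDegree = m :=
  natDegree_eq_of_degree_eq_some (degree_mlift c m)

lemma map_mlift (φ : A →+* B) (c : ℕ → A) (m : ℕ) :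
    (mlift c m).map φ = mlift (fun k => φ (c k)) m := by
  rw [mlift, Polynomial.map_add, Polynomial.map_pow, map_X, map_trunc, mlift]

lemma mlift_coeff_eq_self {p : A[X]} (hp : p.Monic) {m : ℕ} (hm : p.natDegree = m) :
    mlift p.coeff m = p := by
  conv_rhs => rw [hp.as_sum]
  rw [mlift, trunc, hm]
  simp [C_mul_X_pow_eq_monomial]

lemma biv_map {n : ℕ} (ψ : A →+* B) (R : A[X]) (U : Fin n → A[X]) :
    ((R.map (C : A →+* A[X]) - ∏ j, (X - C (U j))).map (mapRingHom ψ))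
      = (R.map ψ).map C - ∏ j, (X - C ((U j).map ψ)) := by
  rw [Polynomial.map_sub, Polynomial.map_map, Polynomial.map_prod]
  congr 1
  · have hc : (mapRingHom ψ).comp (C : A →+* A[X]) = (C : B →+* B[X]).comp ψ :=
      RingHom.ext fun a => by simp
    rw [hc, ← Polynomial.map_map]
  · refine Finset.prod_congr rfl fun j _ => ?_
    rw [Polynomial.map_sub, Polynomial.map_X, Polynomial.map_C, coe_mapRingHom]

end Poly

section FieldFacts

/-- a field-level factorization of a monic non-irreducible polynomial -/
lemma exists_monic_factorization {L : Type*} [Field L] {p : L[X]} (hp : p.Monic)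
    (hdeg : p.natDegree ≠ 0) (hirr : ¬ Irreducible p) :
    ∃ g h : L[X], g.Monic ∧ h.Monic ∧ g.natDegree ≠ 0 ∧ h.natDegree ≠ 0 ∧
      g.natDegree + h.natDegree = p.natDegree ∧ p = g * h := by
  have hpu : ¬ IsUnit p := by
    rw [Polynomial.isUnit_iff_degree_eq_zero]
    rw [degree_eq_natDegree hp.ne_zero]
    exact_mod_cast hdeg
  rw [irreducible_iff] at hirr
  push_neg at hirr
  obtain ⟨a, b, hab, hno⟩ := hirr hpu
  obtain ⟨ha, hb⟩ := hno
  have ha0 : a ≠ 0 := by rintro rfl; exact hp.ne_zero (by simpa using hab)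
  have hb0 : b ≠ 0 := by rintro rfl; exact hp.ne_zero (by simpa using hab)
  have hadeg : a.natDegree ≠ 0 := by
    intro h0
    obtain ⟨c, rfl⟩ := Polynomial.natDegree_eq_zero.mp h0
    exact ha (isUnit_C.mpr (isUnit_iff_ne_zero.mpr (by rintro rfl; simp at ha0)))
  have hbdeg : b.natDegree ≠ 0 := by
    intro h0
    obtain ⟨c, rfl⟩ := Polynomial.natDegree_eq_zero.mp h0
    exact hb (isUnit_C.mpr (isUnit_iff_ne_zero.mpr (by rintro rfl; simp at hb0)))
  have hla : a.leadingCoeff ≠ 0 := leadingCoeff_ne_zero.mpr ha0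
  refine ⟨C (a.leadingCoeff)⁻¹ * a, C a.leadingCoeff * b, ?_, ?_, ?_, ?_, ?_, ?_⟩
  · unfold Polynomial.Monic
    rw [leadingCoeff_mul, leadingCoeff_C, inv_mul_cancel₀ hla]
  · have : (C a.leadingCoeff * b).leadingCoeff = a.leadingCoeff * b.leadingCoeff := by
      rw [leadingCoeff_mul, leadingCoeff_C]
    unfold Polynomial.Monic
    rw [this, ← leadingCoeff_mul, ← hab]
    exact hp
  · rwa [natDegree_C_mul (inv_ne_zero hla)]
  · rwa [natDegree_C_mul hla]
  · rw [natDegree_C_mul (inv_ne_zero hla), natDegree_C_mul hla, hab,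
      natDegree_mul ha0 hb0]
  · rw [mul_mul_mul_comm, ← C_mul, inv_mul_cancel₀ hla, C_1, one_mul, hab]

lemma irreducible_of_no_monic_factorization {L : Type*} [Field L] {p : L[X]} (hp : p.Monic)
    (hdeg : p.natDegree ≠ 0)
    (h : ∀ g h : L[X], g.Monic → h.Monic → g.natDegree ≠ 0 → h.natDegree ≠ 0 → p ≠ g * h) :
    Irreducible p := by
  by_contra hni
  obtain ⟨g, h', h1, h2, h3, h4, _, h6⟩ := exists_monic_factorization hp hdeg hni
  exact h g h' h1 h2 h3 h4 h6

lemma not_unit_of_monic_natDegree_ne_zero {L : Type*} [Field L] {p : L[X]} (hp : p.Monic)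
    (hdeg : p.natDegree ≠ 0) : ¬ IsUnit p := by
  rw [Polynomial.isUnit_iff_degree_eq_zero, degree_eq_natDegree hp.ne_zero]
  exact_mod_cast hdeg

end FieldFacts

section Transfer

variable {S : Type*} {F : S → Type*} [∀ s, Field (F s)] {K : Type*} [Field K]
  {D : Ultrafilter S} {π : (∀ s, F s) →+* K}

lemma nontrivialA (hπ : IsUltraproduct D π) : Nontrivial (∀ s, F s) := by
  refine ⟨0, 1, fun h => ?_⟩
  have : (0 : K) = 1 := by rw [← map_zero π, ← map_one π, h]
  exact zero_ne_one this

lemma map_eq_of_mem (hπ : IsUltraproduct D π) {P Q : (∀ s, F s)[X]}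
    (h : {s | P.map (Pi.evalRingHom F s) = Q.map (Pi.evalRingHom F s)} ∈ D) :
    P.map π = Q.map π := by
  ext k
  rw [coeff_map, coeff_map, hπ.2]
  refine Filter.mem_of_superset h fun s hs => ?_
  have := congrArg (fun q => Polynomial.coeff q k) hs
  simpa [coeff_map] using this

lemma mem_of_map_eq (hπ : IsUltraproduct D π) {P Q : (∀ s, F s)[X]} {N : ℕ}
    (hP : P.natDegree ≤ N) (hQ : Q.natDegree ≤ N) (h : P.map π = Q.map π) :
    {s | P.map (Pi.evalRingHom F s) = Q.map (Pi.evalRingHom F s)} ∈ D := by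
  have key : ∀ k, {s | P.coeff k s = Q.coeff k s} ∈ D := by
    intro k
    rw [← hπ.2]
    have := congrArg (fun q => Polynomial.coeff q k) h
    simpa [coeff_map] using this
  have h2 : (⋂ k ∈ (Finset.range (N+1) : Finset ℕ), {s | P.coeff k s = Q.coeff k s}) ∈ D :=
    (Filter.biInter_mem (Finset.range (N+1)).finite_toSet).mpr fun k _ => key k
  refine Filter.mem_of_superset h2 fun s hs => ?_
  simp only [Set.mem_iInter, Set.mem_setOf_eq, Finset.mem_coe, Finset.mem_range] at hs
  ext k
  rcases le_or_gt k N with hk | hk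
  · simpa [coeff_map] using hs k (Nat.lt_succ_of_le hk)
  · rw [coeff_map, coeff_map, Polynomial.coeff_eq_zero_of_natDegree_lt (lt_of_le_of_lt hP hk),
      Polynomial.coeff_eq_zero_of_natDegree_lt (lt_of_le_of_lt hQ hk)]

/-- If a monic polynomial over the ultraproduct is irreducible, then it is irreducible
componentwise on a large set. -/
lemma irreducible_mem (hπ : IsUltraproduct D π) {P : (∀ s, F s)[X]} {n : ℕ} (hn : n ≠ 0)
    (hP : P.Monic) (hPn : P.natDegree = n) (hf : Irreducible (P.map π)) :
    {s | Irreducible (P.map (Pi.evalRingHom F s))} ∈ D := by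
  classical
  haveI : Nontrivial (∀ s, F s) := nontrivialA hπ
  by_contra hcon
  rw [← Ultrafilter.compl_mem_iff_notMem] at hcon
  set Q : S → ℕ → Prop := fun s i => ∃ g h : (F s)[X], g.Monic ∧ h.Monic ∧
    g.natDegree = i ∧ h.natDegree = n - i ∧ P.map (Pi.evalRingHom F s) = g * h with hQ
  have hsub : {s | Irreducible (P.map (Pi.evalRingHom F s))}ᶜ ⊆
      ⋃ i ∈ (↑(Finset.Ico 1 n) : Set ℕ), {s | Q s i} := by
    intro s hs
    simp only [Set.mem_compl_iff, Set.mem_setOf_eq] at hs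
    have hm : (P.map (Pi.evalRingHom F s)).Monic := hP.map _
    have hd : (P.map (Pi.evalRingHom F s)).natDegree = n := by
      rw [hP.natDegree_map, hPn]
    obtain ⟨g, h, h1, h2, h3, h4, h5, h6⟩ :=
      exists_monic_factorization hm (by rw [hd]; exact hn) hs
    simp only [Set.mem_iUnion, Finset.coe_Ico, Set.mem_Ico, Set.mem_setOf_eq]
    refine ⟨g.natDegree, ⟨Nat.one_le_iff_ne_zero.mpr h3, ?_⟩, g, h, h1, h2, rfl, ?_, h6⟩
    · rw [hd] at h5; omega
    · rw [hd] at h5; omega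
  have hU : (⋃ i ∈ (↑(Finset.Ico 1 n) : Set ℕ), {s | Q s i}) ∈ D :=
    Filter.mem_of_superset hcon hsub
  obtain ⟨i, hi, hBi⟩ := (Ultrafilter.finite_biUnion_mem_iff
    (Finset.Ico 1 n).finite_toSet).mp hU
  simp only [Finset.coe_Ico, Set.mem_Ico] at hi
  set gp : ∀ s, (F s)[X] := fun s => if hs : Q s i then hs.choose else X ^ i with hgp
  set hp' : ∀ s, (F s)[X] := fun s =>
    if hs : Q s i then hs.choose_spec.choose else X ^ (n - i) with hhp
  have hgpm : ∀ s, (gp s).Monic ∧ (gp s).natDegree = i := by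
    intro s
    by_cases hs : Q s i
    · simp only [hgp, dif_pos hs]
      obtain ⟨h1, _, h3, _, _⟩ := hs.choose_spec.choose_spec
      exact ⟨h1, h3⟩
    · simp only [hgp, dif_neg hs]
      exact ⟨monic_X_pow i, natDegree_X_pow i⟩
  have hhpm : ∀ s, (hp' s).Monic ∧ (hp' s).natDegree = n - i := by
    intro s
    by_cases hs : Q s i
    · simp only [hhp, dif_pos hs]
      obtain ⟨_, h2, _, h4, _⟩ := hs.choose_spec.choose_spec
      exact ⟨h2, h4⟩
    · simp only [hhp, dif_neg hs]
      exact ⟨monic_X_pow _, natDegree_X_pow _⟩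
  set G : (∀ s, F s)[X] := mlift (fun k s => (gp s).coeff k) i with hG
  set H : (∀ s, F s)[X] := mlift (fun k s => (hp' s).coeff k) (n - i) with hH
  have hesG : ∀ s, G.map (Pi.evalRingHom F s) = gp s := by
    intro s
    rw [hG, map_mlift]
    exact mlift_coeff_eq_self (hgpm s).1 (hgpm s).2
  have hesH : ∀ s, H.map (Pi.evalRingHom F s) = hp' s := by
    intro s
    rw [hH, map_mlift]
    exact mlift_coeff_eq_self (hhpm s).1 (hhpm s).2
  have hmain : P.map π = (G * H).map π := by
    apply map_eq_of_mem hπ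
    refine Filter.mem_of_superset hBi fun s hs => ?_
    have hQs : Q s i := hs
    have hfac : P.map (Pi.evalRingHom F s) = gp s * hp' s := by
      have := hQs.choose_spec.choose_spec.2.2.2.2
      simp only [hgp, hhp, dif_pos hQs]
      exact this
    simp only [Set.mem_setOf_eq, Polynomial.map_mul, hesG, hesH, hfac]
  rw [Polynomial.map_mul] at hmain
  rcases hf.isUnit_or_isUnit hmain with hu | hu
  · refine not_unit_of_monic_natDegree_ne_zero ((monic_mlift _ _).map π) ?_ (hG ▸ hu)
    rw [(monic_mlift _ _).natDegree_map, natDegree_mlift]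
    omega
  · refine not_unit_of_monic_natDegree_ne_zero ((monic_mlift _ _).map π) ?_ (hH ▸ hu)
    rw [(monic_mlift _ _).natDegree_map, natDegree_mlift]
    omega

/-- If a monic polynomial over the product is irreducible componentwise on a large set,
its image in the ultraproduct is irreducible. -/
lemma irreducible_of_mem (hπ : IsUltraproduct D π) {P : (∀ s, F s)[X]} {n : ℕ} (hn : n ≠ 0)
    (hP : P.Monic) (hPn : P.natDegree = n)
    (h : {s | Irreducible (P.map (Pi.evalRingHom F s))} ∈ D) :
    Irreducible (P.map π) := by
  classical
  haveI : Nontrivial (∀ s, F s) := nontrivialA hπ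
  have hfm : (P.map π).Monic := hP.map π
  have hfd : (P.map π).natDegree = n := by rw [hP.natDegree_map, hPn]
  refine irreducible_of_no_monic_factorization hfm (by rw [hfd]; exact hn) ?_
  intro g h' hg hh hgd hhd hfac
  set lft : K → (∀ s, F s) := Function.surjInv hπ.1 with hlft
  have hlft' : ∀ a, π (lft a) = a := fun a => Function.surjInv_eq hπ.1 a
  set G : (∀ s, F s)[X] := mlift (fun k => lft (g.coeff k)) g.natDegree with hG
  set H : (∀ s, F s)[X] := mlift (fun k => lft (h'.coeff k)) h'.natDegree with hH
  have hGg : G.map π = g := by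
    rw [hG, map_mlift]
    have : (fun k => π (lft (g.coeff k))) = g.coeff := by funext k; exact hlft' _
    rw [this]
    exact mlift_coeff_eq_self hg rfl
  have hHh : H.map π = h' := by
    rw [hH, map_mlift]
    have : (fun k => π (lft (h'.coeff k))) = h'.coeff := by funext k; exact hlft' _
    rw [this]
    exact mlift_coeff_eq_self hh rfl
  have hsum : g.natDegree + h'.natDegree = n := by
    rw [← hfd, hfac, natDegree_mul hg.ne_zero hh.ne_zero]
  have hfac2 : P.map π = (G * H).map π := by
    rw [Polynomial.map_mul, hGg, hHh, hfac]
  have hGHdeg : (G * H).natDegree ≤ n := by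
    refine le_trans natDegree_mul_le ?_
    rw [hG, hH, natDegree_mlift, natDegree_mlift, hsum]
  have hmem := mem_of_map_eq hπ (N := n) (le_of_eq hPn) hGHdeg hfac2
  obtain ⟨s, hs1, hs2⟩ := Ultrafilter.nonempty_of_mem (Filter.inter_mem h hmem)
  simp only [Set.mem_setOf_eq] at hs1 hs2
  have hes : P.map (Pi.evalRingHom F s) =
      G.map (Pi.evalRingHom F s) * H.map (Pi.evalRingHom F s) := by
    rw [hs2, Polynomial.map_mul]
  rcases hs1.isUnit_or_isUnit hes with hu | hu
  · refine not_unit_of_monic_natDegree_ne_zero ((monic_mlift _ _).map _) ?_ (hG ▸ hu)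
    rw [(monic_mlift _ _).natDegree_map, natDegree_mlift]
    exact hgd
  · refine not_unit_of_monic_natDegree_ne_zero ((monic_mlift _ _).map _) ?_ (hH ▸ hu)
    rw [(monic_mlift _ _).natDegree_map, natDegree_mlift]
    exact hhd

end Transfer

section PerS

lemma X_pow_sub_X_dvd (R : Type*) [CommRing R] {q m : ℕ} (hq : 1 ≤ q) (hm : m ≠ 0) :
    (X ^ q - X : R[X]) ∣ X ^ q ^ m - X := by
  have e1 : q - 1 + 1 = q := by omega
  have e2 : q ^ m - 1 + 1 = q ^ m := by
    have : 1 ≤ q ^ m := Nat.one_le_pow _ _ (by omega)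
    omega
  have h1 : (X ^ q - X : R[X]) = X * (X ^ (q - 1) - 1) := by
    rw [mul_sub, mul_one, ← pow_succ', e1]
  have h2 : (X ^ q ^ m - X : R[X]) = X * (X ^ (q ^ m - 1) - 1) := by
    rw [mul_sub, mul_one, ← pow_succ', e2]
  rw [h1, h2]
  apply mul_dvd_mul_left
  obtain ⟨k, hk⟩ := Nat.sub_dvd_pow_sub_pow q 1 m
  have hk' : q ^ m - 1 = (q - 1) * k := by simpa using hk
  have h3 : (X ^ (q ^ m - 1) - 1 : R[X]) = (X ^ (q - 1)) ^ k - 1 ^ k := by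
    rw [← pow_mul, one_pow, hk']
  rw [h3]
  exact sub_dvd_pow_sub_pow _ _ _

/-- Every finite field has a monic irreducible polynomial of every positive degree. -/
lemma exists_monic_irreducible_deg (L : Type*) [Field L] [Finite L] {n : ℕ} (hn : n ≠ 0) :
    ∃ p : L[X], p.Monic ∧ Irreducible p ∧ p.natDegree = n := by
  classical
  haveI : Fintype L := Fintype.ofFinite L
  set p := ringChar L with hpdef
  haveI : CharP L p := ringChar.charP L
  obtain ⟨e, hpp, hcard⟩ := FiniteField.card L p
  haveI : Fact p.Prime := ⟨hpp⟩
  haveI : Algebra (ZMod p) L := ZMod.algebra L p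
  set q := Fintype.card L with hq
  have hq1 : 1 < q := Fintype.one_lt_card
  set E := GaloisField p (e * n) with hE
  have hqn : q ^ n = p ^ (e * n) := by rw [hcard, ← pow_mul]
  have hsE : Splits ((X ^ q ^ n - X : (ZMod p)[X]).map (algebraMap (ZMod p) E)) := by
    rw [hqn]
    exact SplittingField.splits (X ^ p ^ (e * n) - X : (ZMod p)[X])
  have hne : (X ^ q ^ n - X : (ZMod p)[X]) ≠ 0 :=
    FiniteField.X_pow_card_pow_sub_X_ne_zero _ hn hq1
  have hXq : Splits ((X ^ q - X : (ZMod p)[X]).map (algebraMap (ZMod p) E)) :=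
    hsE.of_dvd (Polynomial.map_ne_zero hne) (Polynomial.map_dvd _ (X_pow_sub_X_dvd (ZMod p) (by omega) hn))
  haveI : IsSplittingField (ZMod p) L (X ^ q - X) := FiniteField.isSplittingField_sub L (ZMod p)
  let emb : L →ₐ[ZMod p] E := IsSplittingField.lift L (X ^ q - X) hXq
  letI : Algebra L E := emb.toRingHom.toAlgebra
  haveI : Fintype E := Fintype.ofFinite E
  have hcardE : Fintype.card E = q ^ n := by
    rw [← Nat.card_eq_fintype_card, hE, GaloisField.card p (e * n)
      (by have := e.pos; positivity), hqn]
  have hfr : Module.finrank L E = n := by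
    have h1 : Fintype.card E = q ^ Module.finrank L E := Module.card_eq_pow_finrank
    rw [hcardE] at h1
    exact Nat.pow_right_injective hq1 h1.symm
  obtain ⟨α, hα⟩ := Field.exists_primitive_element_of_finite_bot L E
  have hint : IsIntegral L α := IsIntegral.of_finite L α
  refine ⟨minpoly L α, minpoly.monic hint, minpoly.irreducible hint, ?_⟩
  have h1 : Module.finrank L L⟮α⟯ = (minpoly L α).natDegree :=
    IntermediateField.adjoin.finrank hint
  rw [hα, IntermediateField.finrank_top', hfr] at h1
  exact h1.symm

lemma exists_ofFn_of_card {α : Type*} : ∀ {n : ℕ} (m : Multiset α), Multiset.card m = n →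
    ∃ v : Fin n → α, m = ↑(List.ofFn v)
  | 0, m, h => ⟨Fin.elim0, by simp [Multiset.card_eq_zero.mp h]⟩
  | (n+1), m, h => by
    obtain ⟨a, hm⟩ : ∃ a, a ∈ m := Multiset.card_pos_iff_exists_mem.mp (by omega)
    obtain ⟨m', rfl⟩ := Multiset.exists_cons_of_mem hm
    have hc : Multiset.card m' = n := by
      have := h; simp only [Multiset.card_cons] at this; omega
    obtain ⟨v, hv⟩ := exists_ofFn_of_card m' hc
    refine ⟨Fin.cons a v, ?_⟩
    rw [List.ofFn_succ]
    simp only [Fin.cons_zero, Fin.cons_succ]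
    rw [← Multiset.cons_coe, hv]

lemma natDegree_coeff_mul_le {R : Type*} [CommRing R] {P Q : R[X][X]} {d e : ℕ}
    (hP : ∀ k, (P.coeff k).natDegree ≤ d) (hQ : ∀ k, (Q.coeff k).natDegree ≤ e) (k : ℕ) :
    ((P * Q).coeff k).natDegree ≤ d + e := by
  rw [Polynomial.coeff_mul]
  refine Polynomial.natDegree_sum_le_of_forall_le _ _ fun ij _ => ?_
  exact le_trans Polynomial.natDegree_mul_le (add_le_add (hP _) (hQ _))

lemma natDegree_coeff_prod_le {R : Type*} [CommRing R] {ι : Type*} (t : Finset ι)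
    (f : ι → R[X][X]) (d : ℕ) :
    (∀ i ∈ t, ∀ k, ((f i).coeff k).natDegree ≤ d) →
    ∀ k, ((∏ i ∈ t, f i).coeff k).natDegree ≤ t.card * d := by
  classical
  induction t using Finset.cons_induction with
  | empty =>
    intro _ k
    simp only [Finset.prod_empty, Finset.card_empty, zero_mul]
    rcases eq_or_ne k 0 with rfl | hk
    · simp [Polynomial.coeff_one]
    · simp [Polynomial.coeff_one, hk]
  | cons i t hi ih =>
    intro h k
    rw [Finset.prod_cons, Finset.card_cons]
    have h2 := ih fun j hj => h j (Finset.mem_cons_of_mem hj)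
    calc ((f i * ∏ j ∈ t, f j).coeff k).natDegree ≤ d + t.card * d :=
          natDegree_coeff_mul_le (h i (Finset.mem_cons_self i t)) h2 k
      _ = (t.card + 1) * d := by ring

/-- In a finite field, for monic irreducible `p, r` of the same degree `n`, `r` splits
mod `p` with explicit splitting data. -/
lemma exists_splitting_data {L : Type*} [Field L] [Finite L] {n : ℕ} (hn : n ≠ 0)
    {p r : L[X]} (hp : p.Monic) (hr : r.Monic) (hpn : p.natDegree = n) (hrn : r.natDegree = n)
    (hip : Irreducible p) (hir : Irreducible r) :
    ∃ (u : Fin n → L[X]) (w : ℕ → L[X]), (∀ j, (u j).natDegree < n) ∧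
      (∀ k, (w k).natDegree < n * n + 1) ∧
      ∀ k, (r.map (C : L →+* L[X]) - ∏ j, (X - C (u j))).coeff k = p * w k := by
  classical
  haveI : Fintype L := Fintype.ofFinite L
  set q := Fintype.card L with hq
  have hq1 : 1 < q := Fintype.one_lt_card
  haveI : Fact (Irreducible p) := ⟨hip⟩
  haveI : Module.Finite L (AdjoinRoot p) := Module.Finite.of_basis (AdjoinRoot.powerBasisAux' hp)
  haveI : Finite (AdjoinRoot p) := Module.finite_of_finite L
  haveI : Fintype (AdjoinRoot p) := Fintype.ofFinite _
  have hfrp : Module.finrank L (AdjoinRoot p) = n := by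
    rw [Module.finrank_eq_card_basis (AdjoinRoot.powerBasisAux' hp), Fintype.card_fin, hpn]
  have hcardEp : Fintype.card (AdjoinRoot p) = q ^ n := by
    have h1 : Fintype.card (AdjoinRoot p) = q ^ Module.finrank L (AdjoinRoot p) :=
      Module.card_eq_pow_finrank
    rw [hfrp] at h1; exact h1
  -- r divides X^(q^n) - X
  have hdvd : r ∣ (X ^ q ^ n - X : L[X]) := by
    haveI : Fact (Irreducible r) := ⟨hir⟩
    haveI : Module.Finite L (AdjoinRoot r) :=
      Module.Finite.of_basis (AdjoinRoot.powerBasisAux' hr)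
    haveI : Finite (AdjoinRoot r) := Module.finite_of_finite L
    haveI : Fintype (AdjoinRoot r) := Fintype.ofFinite _
    have hfrr : Module.finrank L (AdjoinRoot r) = n := by
      rw [Module.finrank_eq_card_basis (AdjoinRoot.powerBasisAux' hr), Fintype.card_fin, hrn]
    have hcardEr : Fintype.card (AdjoinRoot r) = q ^ n := by
      have h1 : Fintype.card (AdjoinRoot r) = q ^ Module.finrank L (AdjoinRoot r) :=
        Module.card_eq_pow_finrank
      rw [hfrr] at h1; exact h1
    have hmin : minpoly L (AdjoinRoot.root r) = r :=
      (minpoly.eq_of_irreducible_of_monic hir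
        (by rw [AdjoinRoot.aeval_eq, AdjoinRoot.mk_self]) hr).symm
    rw [← hmin]
    apply minpoly.dvd
    have hpowfix : (AdjoinRoot.root r) ^ q ^ n = AdjoinRoot.root r := by
      rw [← hcardEr]; exact FiniteField.pow_card _
    rw [map_sub, map_pow, aeval_X, hpowfix, sub_self]
  -- r splits in AdjoinRoot p
  have hsplit0 : Splits ((X ^ q ^ n - X : L[X]).map (algebraMap L (AdjoinRoot p))) := by
    have h1 := (FiniteField.isSplittingField_sub (AdjoinRoot p) L).splits
    rwa [hcardEp] at h1
  have hsplitr : Splits (r.map (algebraMap L (AdjoinRoot p))) :=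
    hsplit0.of_dvd (Polynomial.map_ne_zero (FiniteField.X_pow_card_pow_sub_X_ne_zero _ hn hq1))
      (Polynomial.map_dvd _ hdvd)
  set φ := algebraMap L (AdjoinRoot p) with hφ
  have hprod : r.map φ = ((r.map φ).roots.map (fun a => X - C a)).prod :=
    hsplitr.eq_prod_roots_of_monic (hr.map φ)
  have hcardroots : Multiset.card (r.map φ).roots = n := by
    rw [← hsplitr.natDegree_eq_card_roots, hr.natDegree_map, hrn]
  obtain ⟨v, hv⟩ := exists_ofFn_of_card _ hcardroots
  have hsplits : r.map φ = ∏ j, (X - C (v j)) := by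
    rw [hprod, hv]
    rw [Multiset.map_coe, Multiset.prod_coe, List.map_ofFn, List.prod_ofFn]
    simp [Function.comp]
  -- lift the roots to polynomials of degree < n
  have hvu : ∀ j, ∃ u : L[X], u.natDegree < n ∧ AdjoinRoot.mk p u = v j := by
    intro j
    obtain ⟨u0, hu0⟩ := AdjoinRoot.mk_surjective (v j)
    have hp1 : p ≠ 1 := by
      intro h1
      rw [h1, natDegree_one] at hpn
      exact hn hpn.symm
    refine ⟨u0 %ₘ p, by rw [← hpn]; exact natDegree_modByMonic_lt u0 hp hp1, ?_⟩
    rw [modByMonic_eq_sub_mul_div u0 p, map_sub, map_mul, AdjoinRoot.mk_self,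
      zero_mul, sub_zero, hu0]
  choose u hu1 hu2 using hvu
  -- the bivariate difference
  set Δ : L[X][X] := r.map (C : L →+* L[X]) - ∏ j, (X - C (u j)) with hΔ
  have hmapΔ : Δ.map (AdjoinRoot.mk p) = 0 := by
    rw [hΔ, Polynomial.map_sub, Polynomial.map_map]
    have hcomp : (AdjoinRoot.mk p).comp (C : L →+* L[X]) = φ := rfl
    rw [hcomp, Polynomial.map_prod]
    have hlin : ∀ j : Fin n, (X - C (u j)).map (AdjoinRoot.mk p) = X - C (v j) := by
      intro j
      rw [Polynomial.map_sub, Polynomial.map_X, Polynomial.map_C, hu2]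
    simp only [hlin]
    rw [← hsplits, sub_self]
  have hdvdk : ∀ k, p ∣ Δ.coeff k := by
    intro k
    rw [← AdjoinRoot.mk_eq_zero]
    have h1 : (Δ.map (AdjoinRoot.mk p)).coeff k = AdjoinRoot.mk p (Δ.coeff k) :=
      coeff_map _ _
    rw [← h1, hmapΔ, coeff_zero]
  choose w hw using hdvdk
  have hdeltab : ∀ k, (Δ.coeff k).natDegree ≤ n * n := by
    intro k
    rw [hΔ, Polynomial.coeff_sub]
    refine le_trans (Polynomial.natDegree_sub_le _ _) (max_le ?_ ?_)
    · rw [Polynomial.coeff_map]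
      exact le_trans (le_of_eq (natDegree_C _)) (Nat.zero_le _)
    · have hb := natDegree_coeff_prod_le Finset.univ (fun j : Fin n => X - C (u j)) n ?_ k
      · rwa [Finset.card_univ, Fintype.card_fin] at hb
      · intro j _ k'
        match k' with
        | 0 => simp only [Polynomial.coeff_sub, Polynomial.coeff_X_zero, coeff_C,
            if_pos rfl, zero_sub, natDegree_neg]; exact le_of_lt (hu1 j)
        | 1 => simp only [Polynomial.coeff_sub, Polynomial.coeff_X_one, coeff_C,
            if_neg one_ne_zero, sub_zero, natDegree_one]; exact Nat.zero_le _
        | (k'+2) => simp only [Polynomial.coeff_sub, coeff_C, coeff_X]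
                    norm_num
  have hwb : ∀ k, (w k).natDegree < n * n + 1 := by
    intro k
    rcases eq_or_ne (w k) 0 with h0 | h0
    · rw [h0, natDegree_zero]; omega
    · have h1 : (p * w k).natDegree = n + (w k).natDegree := by
        rw [natDegree_mul hp.ne_zero h0, hpn]
      have h2 : (p * w k).natDegree ≤ n * n := by rw [← hw k]; exact hdeltab k
      omega
  exact ⟨u, w, hu1, hwb, fun k => hw k⟩

end PerS

section MainTransfer

variable {S : Type*} {F : S → Type*} [∀ s, Field (F s)] [∀ s, Finite (F s)]
  {K : Type*} [Field K] {D : Ultrafilter S} {π : (∀ s, F s) →+* K}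

lemma splitting_transfer (hπ : IsUltraproduct D π) {P R : (∀ s, F s)[X]} {n : ℕ} (hn : n ≠ 0)
    (hP : P.Monic) (hR : R.Monic) (hPn : P.natDegree = n) (hRn : R.natDegree = n)
    (hT : {s | Irreducible (P.map (Pi.evalRingHom F s)) ∧
      Irreducible (R.map (Pi.evalRingHom F s))} ∈ D) :
    ∃ uK : Fin n → K[X], ∀ k : ℕ,
      (P.map π) ∣ ((R.map π).map (C : K →+* K[X]) - ∏ j, (X - C (uK j))).coeff k := by
  classical
  have hdata : ∀ s, ∃ (u : Fin n → (F s)[X]) (w : ℕ → (F s)[X]),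
      (∀ j, (u j).natDegree < n) ∧ (∀ k, (w k).natDegree < n * n + 1) ∧
      ((Irreducible (P.map (Pi.evalRingHom F s)) ∧
        Irreducible (R.map (Pi.evalRingHom F s))) →
        ∀ k, ((R.map (Pi.evalRingHom F s)).map C - ∏ j, (X - C (u j))).coeff k
          = (P.map (Pi.evalRingHom F s)) * w k) := by
    intro s
    by_cases hs : Irreducible (P.map (Pi.evalRingHom F s)) ∧
        Irreducible (R.map (Pi.evalRingHom F s))
    · obtain ⟨u, w, h1, h2, h3⟩ := exists_splitting_data hn (hP.map _) (hR.map _)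
        (by rw [hP.natDegree_map, hPn]) (by rw [hR.natDegree_map, hRn]) hs.1 hs.2
      exact ⟨u, w, h1, h2, fun _ => h3⟩
    · exact ⟨fun _ => 0, fun _ => 0, fun j => by rw [natDegree_zero]; omega,
        fun k => by rw [natDegree_zero]; omega, fun hc => absurd hc hs⟩
  choose us ws hud hwd heq using hdata
  set U : Fin n → (∀ s, F s)[X] := fun j => trunc (fun k s => (us s j).coeff k) n with hU
  set W : ℕ → (∀ s, F s)[X] := fun k => trunc (fun k' s => (ws s k).coeff k') (n*n+1) with hW
  have hesU : ∀ s j, (U j).map (Pi.evalRingHom F s) = us s j := by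
    intro s j
    rw [hU, map_trunc]
    exact trunc_coeff_eq_self (hud s j)
  have hesW : ∀ s k, (W k).map (Pi.evalRingHom F s) = ws s k := by
    intro s k
    rw [hW, map_trunc]
    exact trunc_coeff_eq_self (hwd s k)
  set Z : (∀ s, F s)[X][X] :=
    R.map (C : (∀ s, F s) →+* (∀ s, F s)[X]) - ∏ j, (X - C (U j)) with hZ
  have key : ∀ (s : S), Z.map (mapRingHom (Pi.evalRingHom F s)) =
      (R.map (Pi.evalRingHom F s)).map C
        - ∏ j, (X - C ((U j).map (Pi.evalRingHom F s))) := fun s => by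
    rw [hZ]; exact biv_map _ _ _
  have keyπ : Z.map (mapRingHom π) = (R.map π).map C - ∏ j, (X - C ((U j).map π)) := by
    rw [hZ]; exact biv_map _ _ _
  have hAk : ∀ k, (Z.coeff k).map π = (P * W k).map π := by
    intro k
    apply map_eq_of_mem hπ
    refine Filter.mem_of_superset hT fun s hs => ?_
    have e := Pi.evalRingHom F s
    show (Z.coeff k).map (Pi.evalRingHom F s) = (P * W k).map (Pi.evalRingHom F s)
    have h2 : (Z.coeff k).map (Pi.evalRingHom F s) =
        (Z.map (mapRingHom (Pi.evalRingHom F s))).coeff k := by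
      rw [coeff_map, coe_mapRingHom]
    rw [h2, key s]
    have h3 : (fun j => X - C ((U j).map (Pi.evalRingHom F s))) =
        (fun j => X - C (us s j)) := by funext j; rw [hesU]
    rw [h3, Polynomial.map_mul, hesW]
    exact heq s hs k
  refine ⟨fun j => (U j).map π, fun k => ?_⟩
  have h4 : ((R.map π).map (C : K →+* K[X]) - ∏ j, (X - C ((U j).map π))).coeff k =
      (Z.map (mapRingHom π)).coeff k := by rw [keyπ]
  rw [h4]
  have h5 : (Z.map (mapRingHom π)).coeff k = (Z.coeff k).map π := by
    rw [coeff_map, coe_mapRingHom]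
  rw [h5, hAk k, Polynomial.map_mul]
  exact Dvd.intro _ rfl

end MainTransfer

section Final

variable {S : Type*} {F : S → Type*} [∀ s, Field (F s)] [∀ s, Finite (F s)]
  {K : Type*} [Field K] {D : Ultrafilter S} {π : (∀ s, F s) →+* K}

/-- The ultraproduct of finite fields is a perfect field. -/
lemma perfect_of_ultraproduct (hπ : IsUltraproduct D π) : PerfectField K := by
  classical
  set p := ringChar K with hpdef
  haveI : CharP K p := ringChar.charP K
  rcases CharP.char_is_prime_or_zero K p with hp | hp
  · haveI : Fact p.Prime := ⟨hp⟩
    have hT : {s | ((p : ℕ) : F s) = 0} ∈ D := by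
      have h0 : π ((p : ℕ) : ∀ s, F s) = π 0 := by
        rw [map_natCast, map_zero, CharP.cast_eq_zero]
      have h1 := (hπ.2 _ _).mp h0
      refine Filter.mem_of_superset h1 fun s hs => ?_
      simpa using hs
    have hsurj : Function.Surjective (frobenius K p) := by
      intro a
      obtain ⟨f, rfl⟩ := hπ.1 a
      have hroot : ∀ s : S, ((p : ℕ) : F s) = 0 → ∃ b : F s, b ^ p = f s := by
        intro s hs
        have hd : ringChar (F s) ∣ p := ringChar.dvd hs
        have hch : ringChar (F s) = p := by
          rcases (Nat.Prime.eq_one_or_self_of_dvd hp _ hd) with h1 | h1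
          · exfalso
            have h2 : ((ringChar (F s) : ℕ) : F s) = 0 :=
              CharP.cast_eq_zero (F s) (ringChar (F s))
            rw [h1, Nat.cast_one] at h2
            exact one_ne_zero h2
          · exact h1
        haveI : CharP (F s) p := by rw [← hch]; exact ringChar.charP (F s)
        have hinj : Function.Injective (fun x : F s => x ^ p) := by
          intro a b hab
          have h3 : (a - b) ^ p = 0 := by
            rw [sub_pow_char]
            simpa [sub_eq_zero] using hab
          have h4 := (pow_eq_zero_iff (Nat.Prime.ne_zero hp)).mp h3
          exact sub_eq_zero.mp h4
        exact Finite.injective_iff_surjective.mp hinj (f s)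
      set g : ∀ s, F s := fun s =>
        if hs : ((p : ℕ) : F s) = 0 then (hroot s hs).choose else 0 with hg
      refine ⟨π g, ?_⟩
      have h5 : π (g ^ p) = π f := by
        rw [hπ.2]
        refine Filter.mem_of_superset hT fun s hs => ?_
        have h6 := (hroot s hs).choose_spec
        simp only [Set.mem_setOf_eq, Pi.pow_apply]
        have h7 : g s = (hroot s hs).choose := dif_pos hs
        rw [h7]
        exact h6
      calc frobenius K p (π g) = (π g) ^ p := frobenius_def p (π g)
        _ = π (g ^ p) := (map_pow π g p).symm
        _ = π f := h5
    haveI : PerfectRing K p := PerfectRing.ofSurjective K p hsurj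
    exact PerfectRing.toPerfectField K p
  · haveI : CharP K 0 := by rw [← hp]; infer_instance
    haveI : CharZero K := CharP.charP_to_charZero K
    exact PerfectField.ofCharZero

lemma exists_primitive_intermediate {K : Type*} [Field K] [PerfectField K]
    (E : IntermediateField K (AlgebraicClosure K)) [FiniteDimensional K ↥E] :
    ∃ α : AlgebraicClosure K, E = K⟮α⟯ := by
  obtain ⟨γ, hγ⟩ := Field.exists_primitive_element K ↥E
  refine ⟨γ.val, ?_⟩
  have h1 := congrArg (fun (x : IntermediateField K ↥E) => x.map E.val) hγ
  rw [IntermediateField.adjoin_map] at h1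
  have h2 : (⊤ : IntermediateField K ↥E).map E.val = E := by
    apply SetLike.coe_injective
    rw [IntermediateField.coe_map]
    ext x
    constructor
    · rintro ⟨y, -, rfl⟩
      exact y.2
    · intro hx
      exact ⟨⟨x, hx⟩, trivial, rfl⟩
  rw [h2] at h1
  rw [Set.image_singleton] at h1
  exact h1.symm

/-- Uniqueness core: any two intermediate fields of the algebraic closure of the same
finite degree over the ultraproduct are comparable. -/
lemma le_of_both (hπ : IsUltraproduct D π) {n : ℕ} (hn : n ≠ 0)
    {E₁ E₂ : IntermediateField K (AlgebraicClosure K)}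
    (h1 : Module.finrank K ↥E₁ = n) (h2 : Module.finrank K ↥E₂ = n) : E₂ ≤ E₁ := by
  classical
  haveI : Nontrivial (∀ s, F s) := nontrivialA hπ
  haveI : PerfectField K := perfect_of_ultraproduct hπ
  haveI hf1 : FiniteDimensional K ↥E₁ :=
    Module.finite_of_finrank_pos (h1 ▸ Nat.pos_of_ne_zero hn)
  haveI hf2 : FiniteDimensional K ↥E₂ :=
    Module.finite_of_finrank_pos (h2 ▸ Nat.pos_of_ne_zero hn)
  obtain ⟨α, hE1⟩ := exists_primitive_intermediate E₁
  obtain ⟨β, hE2⟩ := exists_primitive_intermediate E₂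
  have hαE : α ∈ E₁ := by rw [hE1]; exact IntermediateField.mem_adjoin_simple_self K α
  have hβE : β ∈ E₂ := by rw [hE2]; exact IntermediateField.mem_adjoin_simple_self K β
  have hαint : IsIntegral K α := by
    have h3 : IsIntegral K (⟨α, hαE⟩ : ↥E₁) := IsIntegral.of_finite K _
    have h4 := h3.map E₁.val
    exact h4
  have hβint : IsIntegral K β := by
    have h3 : IsIntegral K (⟨β, hβE⟩ : ↥E₂) := IsIntegral.of_finite K _
    exact h3.map E₂.val
  set f := minpoly K α with hf
  set g := minpoly K β with hgdef
  have hfdeg : f.natDegree = n := by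
    have h5 := IntermediateField.adjoin.finrank hαint
    rw [← hE1, h1] at h5
    exact h5.symm
  have hgdeg : g.natDegree = n := by
    have h5 := IntermediateField.adjoin.finrank hβint
    rw [← hE2, h2] at h5
    exact h5.symm
  -- lift the minimal polynomials to the product
  set lft : K → (∀ s, F s) := Function.surjInv hπ.1 with hlft
  have hlft' : ∀ a, π (lft a) = a := fun a => Function.surjInv_eq hπ.1 a
  set P : (∀ s, F s)[X] := mlift (fun k => lft (f.coeff k)) n with hP
  set R : (∀ s, F s)[X] := mlift (fun k => lft (g.coeff k)) n with hR
  have hPmap : P.map π = f := by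
    rw [hP, map_mlift]
    have h6 : (fun k => π (lft (f.coeff k))) = f.coeff := by funext k; exact hlft' _
    rw [h6]
    exact mlift_coeff_eq_self (minpoly.monic hαint) hfdeg
  have hRmap : R.map π = g := by
    rw [hR, map_mlift]
    have h6 : (fun k => π (lft (g.coeff k))) = g.coeff := by funext k; exact hlft' _
    rw [h6]
    exact mlift_coeff_eq_self (minpoly.monic hβint) hgdeg
  have hPirr := irreducible_mem hπ hn (monic_mlift _ _) (natDegree_mlift _ _)
    (by rw [hPmap]; exact minpoly.irreducible hαint)
  have hRirr := irreducible_mem hπ hn (monic_mlift _ _) (natDegree_mlift _ _)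
    (by rw [hRmap]; exact minpoly.irreducible hβint)
  have hT : {s | Irreducible (P.map (Pi.evalRingHom F s)) ∧
      Irreducible (R.map (Pi.evalRingHom F s))} ∈ D := by
    refine Filter.mem_of_superset (Filter.inter_mem hPirr hRirr) fun s hs => ⟨hs.1, hs.2⟩
  obtain ⟨uK, hdvd⟩ := splitting_transfer hπ hn (monic_mlift _ _) (monic_mlift _ _)
    (natDegree_mlift _ _) (natDegree_mlift _ _) hT
  simp only [← hP, ← hR, hPmap, hRmap] at hdvd
  -- push the identity into the algebraic closure by evaluating at α
  set ψ : K[X] →+* AlgebraicClosure K :=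
    (Polynomial.aeval α : K[X] →ₐ[K] AlgebraicClosure K).toRingHom with hψ
  set Z : K[X][X] := g.map (C : K →+* K[X]) - ∏ j, (X - C (uK j)) with hZdef
  have hzero : ∀ k, ψ (Z.coeff k) = 0 := by
    intro k
    obtain ⟨c, hc⟩ := hdvd k
    rw [hc, map_mul]
    have h7 : ψ f = 0 := minpoly.aeval K α
    rw [h7, zero_mul]
  have hmap0 : Z.map ψ = 0 := by
    ext k
    rw [coeff_map, hzero k, coeff_zero]
  have hexp : Z.map ψ = g.map (algebraMap K (AlgebraicClosure K))
      - ∏ j, (X - C (ψ (uK j))) := by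
    rw [hZdef, Polynomial.map_sub, Polynomial.map_map, Polynomial.map_prod]
    congr 1
    · have h8 : ψ.comp (C : K →+* K[X]) = algebraMap K (AlgebraicClosure K) :=
        RingHom.ext fun a => by simp [hψ]
      rw [h8]
    · refine Finset.prod_congr rfl fun j _ => ?_
      rw [Polynomial.map_sub, Polynomial.map_X, Polynomial.map_C]
  have hfinal : g.map (algebraMap K (AlgebraicClosure K)) = ∏ j, (X - C (ψ (uK j))) := by
    have h9 := hmap0
    rw [hexp] at h9
    exact sub_eq_zero.mp h9
  have hβroot : Polynomial.eval β (g.map (algebraMap K (AlgebraicClosure K))) = 0 := by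
    rw [Polynomial.eval_map, ← Polynomial.aeval_def]
    exact minpoly.aeval K β
  rw [hfinal, Polynomial.eval_prod] at hβroot
  obtain ⟨j, -, hj⟩ := Finset.prod_eq_zero_iff.mp hβroot
  simp only [Polynomial.eval_sub, Polynomial.eval_X, Polynomial.eval_C] at hj
  have hβeq : β = ψ (uK j) := sub_eq_zero.mp hj
  have hmem : ψ (uK j) ∈ E₁ := by
    have h10 := Polynomial.aeval_algHom_apply E₁.val (⟨α, hαE⟩ : ↥E₁) (uK j)
    have h11 : E₁.val (⟨α, hαE⟩ : ↥E₁) = α := rfl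
    rw [h11] at h10
    have h12 : ψ (uK j) = E₁.val (Polynomial.aeval (⟨α, hαE⟩ : ↥E₁) (uK j)) := h10
    rw [h12]
    exact (Polynomial.aeval (⟨α, hαE⟩ : ↥E₁) (uK j)).2
  rw [hE2]
  refine IntermediateField.adjoin_le_iff.mpr ?_
  rw [hβeq]
  exact Set.singleton_subset_iff.mpr hmem

/-- Existence of a degree-`n` intermediate field. -/
lemma exists_finrank (hπ : IsUltraproduct D π) {n : ℕ} (hn : n ≠ 0) :
    ∃ E : IntermediateField K (AlgebraicClosure K), Module.finrank K ↥E = n := by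
  classical
  haveI : Nontrivial (∀ s, F s) := nontrivialA hπ
  have hps : ∀ s : S, ∃ p : (F s)[X], p.Monic ∧ Irreducible p ∧ p.natDegree = n :=
    fun s => exists_monic_irreducible_deg (F s) hn
  choose ps h1 h2 h3 using hps
  set P : (∀ s, F s)[X] := mlift (fun k s => (ps s).coeff k) n with hPdef
  have hesP : ∀ s, P.map (Pi.evalRingHom F s) = ps s := fun s => by
    rw [hPdef, map_mlift]
    exact mlift_coeff_eq_self (h1 s) (h3 s)
  have hirr : Irreducible (P.map π) := irreducible_of_mem hπ hn (monic_mlift _ _)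
    (natDegree_mlift _ _)
    (Filter.mem_of_superset Filter.univ_mem fun s _ => by
      simp only [Set.mem_setOf_eq]
      rw [hesP]
      exact h2 s)
  set f := P.map π with hfdef
  have hfm : f.Monic := (monic_mlift _ _).map π
  have hfd : f.natDegree = n := by rw [hfdef, (monic_mlift _ _).natDegree_map, natDegree_mlift]
  obtain ⟨α, hα⟩ := IsAlgClosed.exists_aeval_eq_zero (AlgebraicClosure K) f
    (by rw [degree_eq_natDegree hfm.ne_zero, hfd]; exact_mod_cast hn)
  have hmin : minpoly K α = f := (minpoly.eq_of_irreducible_of_monic hirr hα hfm).symm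
  have hint : IsIntegral K α := ⟨f, hfm, by rwa [← Polynomial.aeval_def]⟩
  refine ⟨K⟮α⟯, ?_⟩
  rw [IntermediateField.adjoin.finrank hint, hmin, hfd]

end Final

end UQF

/-- Every nonprincipal ultraproduct of finite fields is quasi-finite. -/
theorem stmt_6 {S : Type*} [Infinite S] (D : Ultrafilter S) (hD : ∀ s : S, D ≠ pure s)
    (F : S → Type*) [∀ s, Field (F s)] [∀ s, Finite (F s)] (K : Type*) [Field K]
    (π : (∀ s, F s) →+* K) (hπ : IsUltraproduct D π) :
    QuasiFinite K := by
  refine ⟨UQF.perfect_of_ultraproduct hπ, fun n hn => ?_⟩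
  have hn0 : n ≠ 0 := by omega
  obtain ⟨E₀, hE₀⟩ := UQF.exists_finrank hπ hn0
  exact ⟨E₀, hE₀, fun E' hE' =>
    le_antisymm (UQF.le_of_both hπ hn0 hE₀ hE') (UQF.le_of_both hπ hn0 hE' hE₀)⟩
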